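/- arXiv:1911.06109 — 3 statements merged into one kernel-verified Lean document; each statement's English description precedes it below -/
import Mathlib

section
/- Let A and B be L-structures such that T_u*(A) ⊆ T_u*(B). Then the union Diag⁺(A) ∪ Diag⁺(B) of their positive diagrams is consistent in the language L(A ∪ B): there exists an L-structure D with homomorphisms from both A and B into D. -/
open FirstOrder FirstOrder.Language

universe u v w w'

namespace PositiveLogic

/-- Positive formulas with `n` free variables: built from `⊥`, atomic formulas,
`∧`, `∨` and `∃`. -/
inductive PosForm (L : FirstOrder.Language.{u, v}) : ℕ → Type (max u v)
  | falsum {n : ℕ} : PosForm L n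
  | equal {n : ℕ} (t u : L.Term (Fin n)) : PosForm L n
  | rel {n l : ℕ} (R : L.Relations l) (ts : Fin l → L.Term (Fin n)) : PosForm L n
  | and {n : ℕ} (φ ψ : PosForm L n) : PosForm L n
  | or {n : ℕ} (φ ψ : PosForm L n) : PosForm L n
  | ex {n : ℕ} (φ : PosForm L (n + 1)) : PosForm L n

variable {L : FirstOrder.Language.{u, v}}

/-- Realization of a positive formula in a structure. -/
def PosForm.Realize {M : Type w} [L.Structure M] :
    ∀ {n : ℕ}, PosForm L n → (Fin n → M) → Prop
  | _, .falsum, _ => False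
  | _, .equal t u, v => t.realize v = u.realize v
  | _, .rel R ts, v => Structure.RelMap R fun i => (ts i).realize v
  | _, .and φ ψ, v => φ.Realize v ∧ ψ.Realize v
  | _, .or φ ψ, v => φ.Realize v ∨ ψ.Realize v
  | _, .ex φ, v => ∃ x : M, φ.Realize (Fin.snoc v x)

/-- A positive sentence `φ` (element of `PosForm L 0`) holds in `M`. -/
def PosRealize (M : Type w) [L.Structure M] (φ : PosForm L 0) : Prop :=
  φ.Realize (Fin.elim0 : Fin 0 → M)

/-- `Diag⁺*(M)`: the set of positive `L`-sentences true in `M`. -/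
def posTheory (M : Type w) [L.Structure M] : Set (PosForm L 0) :=
  {φ | PosRealize M φ}

/-- `T_u*(M)`, identified with the set of positive `L`-sentences whose negation
(an h-universal sentence) is true in `M`. -/
def TuStar (M : Type w) [L.Structure M] : Set (PosForm L 0) :=
  {φ | ¬ PosRealize M φ}

/-- A basic h-inductive sentence `∀ x̄ (φ(x̄) → ψ(x̄))` with `φ, ψ` positive.
(A general h-inductive sentence, a finite conjunction of such, is equivalent to
the set of its conjuncts.) -/
structure HInd (L : FirstOrder.Language.{u, v}) : Type (max u v) where
  n : ℕ
  hyp : PosForm L n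
  concl : PosForm L n

/-- Realization of a basic h-inductive sentence. -/
def HInd.Realize (s : HInd L) (M : Type w) [L.Structure M] : Prop :=
  ∀ v : Fin s.n → M, s.hyp.Realize v → s.concl.Realize v

/-- `M` is a model of the h-inductive theory `T`. -/
def HModels (M : Type w) [L.Structure M] (T : Set (HInd L)) : Prop :=
  ∀ s ∈ T, s.Realize M

/-- `T_i*(M)`: the set of (basic) h-inductive `L`-sentences true in `M`. -/
def TiStar (M : Type w) [L.Structure M] : Set (HInd L) :=
  {s | s.Realize M}

/-- `T_u(T)`: the h-universal consequences of `T`, identified with the set of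
positive sentences `φ` such that `¬φ` holds in every model of `T`. -/
def TuOf (T : Set (HInd L)) : Set (PosForm L 0) :=
  {φ | ∀ (M : Type (max u v)) [L.Structure M], HModels M T → ¬ PosRealize M φ}

/-- A homomorphism is an immersion if it preserves and reflects all positive
formulas. -/
def IsImmersion {A : Type w} {B : Type w'} [L.Structure A] [L.Structure B]
    (f : A →[L] B) : Prop :=
  ∀ {n : ℕ} (φ : PosForm L n) (v : Fin n → A), φ.Realize v ↔ φ.Realize (f ∘ v)

/-- A homomorphism `f : A → B` is a strong immersion if `B`, with parameters
from `A` interpreted via `f`, models `T_i(A)`, the full h-inductive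
`L(A)`-theory of `A`. -/
def IsStrongImmersion {A : Type w} {B : Type w'} [L.Structure A] [L.Structure B]
    (f : A →[L] B) : Prop :=
  ∀ {n m : ℕ} (φ ψ : PosForm L (n + m)) (a : Fin m → A),
    (∀ v : Fin n → A, φ.Realize (Fin.append v a) → ψ.Realize (Fin.append v a)) →
    ∀ v : Fin n → B, φ.Realize (Fin.append v (f ∘ a)) → ψ.Realize (Fin.append v (f ∘ a))

/-- `M` is a positively closed (pc) model of `T`: it models `T` and every
homomorphism from `M` into a model of `T` is an immersion. -/
def IsPC (T : Set (HInd L)) (M : Type (max u v)) [L.Structure M] : Prop :=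
  HModels M T ∧
    ∀ (N : Type (max u v)) [L.Structure N], HModels N T → ∀ f : M →[L] N, IsImmersion f

/-- `T` has the joint continuation property (is positively complete). -/
def JCP (T : Set (HInd L)) : Prop :=
  ∀ (A : Type (max u v)) [L.Structure A] (B : Type (max u v)) [L.Structure B],
    HModels A T → HModels B T →
      ∃ (C : Type (max u v)) (_ : L.Structure C),
        HModels C T ∧ Nonempty (A →[L] C) ∧ Nonempty (B →[L] C)

/-- `T₁` and `T₂` are `T`-complete. -/
def TComplete (T₁ T₂ T : Set (HInd L)) : Prop :=
  ∀ (A : Type (max u v)) [L.Structure A] (B : Type (max u v)) [L.Structure B],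
    HModels A T₁ → HModels B T₂ →
      ∃ (C : Type (max u v)) (_ : L.Structure C),
        HModels C T ∧ Nonempty (A →[L] C) ∧ Nonempty (B →[L] C)

namespace PosForm

/-- Relabelling of the free variables of a positive formula. -/
def relabel : ∀ {n m : ℕ}, (Fin n → Fin m) → PosForm L n → PosForm L m
  | _, _, ρ, .falsum => .falsum
  | _, _, ρ, .equal t u => .equal (t.relabel ρ) (u.relabel ρ)
  | _, _, ρ, .rel R ts => .rel R fun i => (ts i).relabel ρ
  | _, _, ρ, .and φ ψ => .and (relabel ρ φ) (relabel ρ ψ)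
  | _, _, ρ, .or φ ψ => .or (relabel ρ φ) (relabel ρ ψ)
  | _, _, ρ, .ex φ =>
      .ex (relabel (Fin.lastCases (Fin.last _) (fun i => (ρ i).castSucc)) φ)

theorem realize_relabel {M : Type w} [L.Structure M] :
    ∀ {n m : ℕ} (ρ : Fin n → Fin m) (φ : PosForm L n) (v : Fin m → M),
      (φ.relabel ρ).Realize v ↔ φ.Realize (v ∘ ρ)
  | _, _, ρ, .falsum, v => Iff.rfl
  | _, _, ρ, .equal t u, v => by
      simp [relabel, PosForm.Realize, Term.realize_relabel]
  | _, _, ρ, .rel R ts, v => by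
      simp [relabel, PosForm.Realize, Term.realize_relabel]
  | _, _, ρ, .and φ ψ, v => by
      simp [relabel, PosForm.Realize, realize_relabel ρ φ v, realize_relabel ρ ψ v]
  | _, _, ρ, .or φ ψ, v => by
      simp [relabel, PosForm.Realize, realize_relabel ρ φ v, realize_relabel ρ ψ v]
  | _, _, ρ, .ex φ, v => by
      simp only [relabel, PosForm.Realize]
      refine exists_congr fun x => ?_
      rw [realize_relabel]
      have : (Fin.snoc v x ∘ Fin.lastCases (Fin.last _) fun i => (ρ i).castSucc)
          = Fin.snoc (v ∘ ρ) x := by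
        funext i
        refine Fin.lastCases ?_ (fun j => ?_) i <;>
          simp [Function.comp, Fin.snoc_last, Fin.snoc_castSucc]
      rw [this]

/-- Conjunction of a nonempty list of positive formulas. -/
def conjNE {n : ℕ} : PosForm L n → List (PosForm L n) → PosForm L n
  | φ, [] => φ
  | φ, ψ :: l => .and φ (conjNE ψ l)

theorem realize_conjNE {M : Type w} [L.Structure M] {n : ℕ} :
    ∀ (φ : PosForm L n) (l : List (PosForm L n)) (v : Fin n → M),
      (conjNE φ l).Realize v ↔ ∀ ψ ∈ φ :: l, ψ.Realize v
  | φ, [], v => by simp [conjNE]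
  | φ, ψ :: l, v => by
      rw [conjNE]
      show φ.Realize v ∧ (conjNE ψ l).Realize v ↔ _
      rw [realize_conjNE ψ l v]
      simp only [List.mem_cons]
      constructor
      · rintro ⟨h1, h2⟩ χ hχ
        rcases hχ with rfl | hχ
        · exact h1
        · exact h2 χ hχ
      · intro hχ
        exact ⟨hχ φ (Or.inl rfl), fun χ hc => hχ χ (Or.inr hc)⟩

/-- Existential closure of a positive formula. -/
def exCl : ∀ {n : ℕ}, PosForm L n → PosForm L 0
  | 0, φ => φ
  | _ + 1, φ => exCl φ.ex

theorem realize_exCl {M : Type w} [L.Structure M] :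
    ∀ {n : ℕ} (φ : PosForm L n), PosRealize M (exCl φ) ↔ ∃ v : Fin n → M, φ.Realize v
  | 0, φ => by
      constructor
      · intro hφ; exact ⟨Fin.elim0, hφ⟩
      · rintro ⟨v, hv⟩
        have : v = (Fin.elim0 : Fin 0 → M) := Subsingleton.elim _ _
        rw [this] at hv; exact hv
  | n + 1, φ => by
      rw [exCl, realize_exCl φ.ex]
      constructor
      · rintro ⟨v, x, hx⟩; exact ⟨Fin.snoc v x, hx⟩
      · rintro ⟨w, hw⟩
        exact ⟨Fin.init w, w (Fin.last n), by rwa [Fin.snoc_init_self]⟩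

end PosForm

section Combo

variable {A : Type w} {B : Type w'} [L.Structure A] [L.Structure B]

theorem nonemptyA (hAB : ∀ φ : PosForm L 0, PosRealize B φ → PosRealize A φ) (b : B) :
    Nonempty A := by
  have hBr : PosRealize B (PosForm.ex (L := L) (.equal (Term.var 0) (Term.var 0))) := by
    simp only [PosRealize, PosForm.Realize]
    exact ⟨b, by trivial⟩
  have hAr := hAB _ hBr
  simp only [PosRealize, PosForm.Realize] at hAr
  obtain ⟨x, -⟩ := hAr
  exact ⟨x⟩

theorem combo (hAB : ∀ φ : PosForm L 0, PosRealize B φ → PosRealize A φ)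
    (s : Finset {p : Σ n : ℕ, PosForm L n × (Fin n → B) // p.2.1.Realize p.2.2}) :
    ∃ g : B → A, ∀ p ∈ s, p.1.2.1.Realize (g ∘ p.1.2.2) := by
  classical
  rcases s.eq_empty_or_nonempty with rfl | hsne
  · exact ⟨fun b => (nonemptyA hAB b).some, by simp⟩
  · -- the finite set of parameters from `B`
    set T : Finset B := s.sup (fun p => Finset.image p.1.2.2 Finset.univ) with hT
    have hmem : ∀ p ∈ s, ∀ i, p.1.2.2 i ∈ T := by
      intro p hp i
      exact Finset.mem_sup.2 ⟨p, hp, Finset.mem_image_of_mem _ (Finset.mem_univ i)⟩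
    set k := T.card with hk
    let e : Fin k → B := fun i => (T.equivFin.symm i : B)
    let ρ : ∀ p ∈ s, Fin p.1.1 → Fin k := fun p hp i => T.equivFin ⟨p.1.2.2 i, hmem p hp i⟩
    have heρ : ∀ p (hp : p ∈ s) i, e (ρ p hp i) = p.1.2.2 i := by
      intro p hp i
      simp [e, ρ]
    -- the conjunction of the relabelled formulas
    let F : {x // x ∈ s} → PosForm L k := fun q => PosForm.relabel (ρ q.1 q.2) q.1.1.2.1
    obtain ⟨q0, l, hl⟩ : ∃ q0 l, s.attach.toList = q0 :: l := by
      rcases hn : s.attach.toList with _ | ⟨a, l⟩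
      · exfalso
        rw [Finset.toList_eq_nil, Finset.attach_eq_empty_iff] at hn
        exact hsne.ne_empty hn
      · exact ⟨a, l, rfl⟩
    have hall : ∀ q : {x // x ∈ s}, q ∈ q0 :: l := by
      intro q; rw [← hl]; exact Finset.mem_toList.2 (Finset.mem_attach _ _)
    -- the sentence holds in `B`
    have hB : PosRealize B (PosForm.exCl (PosForm.conjNE (F q0) (l.map F))) := by
      rw [PosForm.realize_exCl]
      refine ⟨e, ?_⟩
      rw [PosForm.realize_conjNE]
      intro ψ hψ
      have : ∃ q : {x // x ∈ s}, ψ = F q := by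
        rcases List.mem_cons.1 hψ with h1 | h1
        · exact ⟨q0, h1⟩
        · obtain ⟨q, -, rfl⟩ := List.mem_map.1 h1; exact ⟨q, rfl⟩
      obtain ⟨q, rfl⟩ := this
      rw [PosForm.realize_relabel]
      have : e ∘ ρ q.1 q.2 = q.1.1.2.2 := funext (heρ q.1 q.2)
      rw [this]
      exact q.1.2
    -- hence it holds in `A`
    obtain ⟨v, hv⟩ := (PosForm.realize_exCl _).1 (hAB _ hB)
    rw [PosForm.realize_conjNE] at hv
    refine ⟨fun b => if hb : b ∈ T then v (T.equivFin ⟨b, hb⟩) else (nonemptyA hAB b).some,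
      ?_⟩
    intro p hp
    have hq : (⟨p, hp⟩ : {x // x ∈ s}) ∈ q0 :: l := hall _
    have hvp : (F ⟨p, hp⟩).Realize v := by
      rcases List.mem_cons.1 hq with h' | h'
      · rw [h']; exact hv _ List.mem_cons_self
      · exact hv _ (List.mem_cons_of_mem _ (List.mem_map_of_mem (f := F) h'))
    have hvp' : p.1.2.1.Realize (v ∘ ρ p hp) := (PosForm.realize_relabel _ _ _).1 hvp
    have hgeq : (fun b => if hb : b ∈ T then v (T.equivFin ⟨b, hb⟩)
        else (nonemptyA hAB b).some) ∘ p.1.2.2 = v ∘ ρ p hp := by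
      funext i
      simp only [Function.comp_apply, dif_pos (hmem p hp i)]
      try rfl
    rw [hgeq]
    exact hvp'

end Combo


/-- if `T_u*(A) ⊆ T_u*(B)` then `Diag⁺(A) ∪ Diag⁺(B)` is consistent,
i.e. there is a common continuation of `A` and `B`. -/
theorem common_continuation_of_TuStar_subset (A : Type w) (B : Type w')
    [L.Structure A] [L.Structure B] (h : TuStar (L := L) A ⊆ TuStar (L := L) B) :
    ∃ (D : Type (max u v w w')) (_ : L.Structure D),
      Nonempty (A →[L] D) ∧ Nonempty (B →[L] D) := by
  classical
  have hAB : ∀ φ : PosForm L 0, PosRealize B φ → PosRealize A φ := by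
    intro φ hb
    by_contra ha
    exact h ha hb
  let P := {p : Σ n : ℕ, PosForm L n × (Fin n → B) // p.2.1.Realize p.2.2}
  haveI : Nonempty (Finset P) := ⟨∅⟩
  let U : Ultrafilter (Finset P) := Ultrafilter.of Filter.atTop
  have hU : ∀ p : P, ∀ᶠ s : Finset P in U, p ∈ s := by
    intro p
    have h1 : {s : Finset P | {p} ≤ s} ∈ (Filter.atTop : Filter (Finset P)) :=
      Filter.mem_atTop _
    have h2 := Ultrafilter.of_le (Filter.atTop : Filter (Finset P)) h1
    exact Filter.mem_of_superset h2 fun s hs => Finset.singleton_subset_iff.1 hs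
  choose g hg using fun s : Finset P => combo hAB s
  refine ⟨(U : Filter (Finset P)).Product (fun _ => A), inferInstance,
    ⟨⟨fun a => (↑(fun _ : Finset P => a) : (U : Filter (Finset P)).Product (fun _ => A)),
      ?_, ?_⟩⟩,
    ⟨⟨fun b => (↑(fun s : Finset P => g s b) : (U : Filter (Finset P)).Product (fun _ => A)),
      ?_, ?_⟩⟩⟩
  · intro n f x
    exact (Ultraproduct.funMap_cast f fun i _ => x i).symm
  · intro n r x hx
    exact (relMap_quotient_mk' ((U : Filter (Finset P)).productSetoid fun _ => A) r
      fun i _ => x i).2 (Filter.Eventually.of_forall fun _ => hx)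
  · intro n f x
    refine Eq.trans ?_ (show Structure.funMap f ((fun b => (↑(fun s : Finset P => g s b) :
          (U : Filter (Finset P)).Product (fun _ => A))) ∘ x)
        = (↑(fun s : Finset P => Structure.funMap f fun i => g s (x i)) :
            (U : Filter (Finset P)).Product fun _ => A) from
        Ultraproduct.funMap_cast f fun i s => g s (x i)).symm
    refine Quotient.sound' ?_
    have hp : PosForm.Realize (L := L)
        (.equal (Term.func f fun i => Term.var i.castSucc) (Term.var (Fin.last n)))
        (Fin.snoc x (Structure.funMap f x)) := by
      simp [PosForm.Realize, Term.realize]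
    have hev := hU ⟨⟨n + 1, (.equal (Term.func f fun i => Term.var i.castSucc)
      (Term.var (Fin.last n)), Fin.snoc x (Structure.funMap f x))⟩, hp⟩
    filter_upwards [hev] with s hs
    have := hg s _ hs
    simp only [PosForm.Realize, Term.realize, Function.comp_apply, Fin.snoc_castSucc,
      Fin.snoc_last] at this
    exact this.symm
  · intro n r x hx
    have hp : PosForm.Realize (L := L) (.rel r fun i => Term.var i) x := by
      simpa [PosForm.Realize, Term.realize] using hx
    have hev := hU ⟨⟨n, (.rel r fun i => Term.var i, x)⟩, hp⟩
    refine (relMap_quotient_mk' ((U : Filter (Finset P)).productSetoid fun _ => A) r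
      fun i s => g s (x i)).2 ?_
    filter_upwards [hev] with s hs
    have := hg s _ hs
    simpa [PosForm.Realize, Term.realize, Function.comp] using this

end PositiveLogic
end

section
/- Let T be an h-inductive L-theory and A a pc model of T. Then T_u*(A) is minimal in the set {T_u*(B) : B ⊨ T} ordered by inclusion: for every model B of T with T_u*(B) ⊆ T_u*(A), one has T_u*(A) ⊆ T_u*(B). -/
open FirstOrder FirstOrder.Language

universe u v w w'

namespace PositiveLogic

variable {L : FirstOrder.Language.{u, v}}

/-! ### Auxiliary material for the proof -/

section Aux

open FirstOrder.Language.Structure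

variable {L : FirstOrder.Language.{u, v}}

/-- Translation of positive formulas into bounded formulas. -/
def PosForm.toBF : ∀ {n : ℕ}, PosForm L n → L.BoundedFormula Empty n
  | _, .falsum => ⊥
  | _, .equal t u => Term.bdEqual (t.relabel Sum.inr) (u.relabel Sum.inr)
  | _, .rel R ts => Relations.boundedFormula R fun i => (ts i).relabel Sum.inr
  | _, .and φ ψ => φ.toBF ⊓ ψ.toBF
  | _, .or φ ψ => φ.toBF ⊔ ψ.toBF
  | _, .ex φ => φ.toBF.ex

theorem PosForm.realize_toBF {M : Type w} [L.Structure M] :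
    ∀ {n : ℕ} (φ : PosForm L n) (v₀ : Empty → M) (v : Fin n → M),
      φ.toBF.Realize v₀ v ↔ φ.Realize v
  | _, .falsum, _, _ => by simp [toBF, PosForm.Realize]
  | _, .equal t u, v₀, v => by
      simp [toBF, PosForm.Realize, Term.realize_relabel, Sum.elim_comp_inr]
  | _, .rel R ts, v₀, v => by
      simp [toBF, PosForm.Realize, Term.realize_relabel, Sum.elim_comp_inr]
  | _, .and φ ψ, v₀, v => by
      simp [toBF, PosForm.Realize, realize_toBF φ v₀ v, realize_toBF ψ v₀ v]
  | _, .or φ ψ, v₀, v => by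
      simp [toBF, PosForm.Realize, realize_toBF φ v₀ v, realize_toBF ψ v₀ v]
  | _, .ex φ, v₀, v => by
      simp only [toBF, BoundedFormula.realize_ex, PosForm.Realize]
      exact exists_congr fun x => realize_toBF φ v₀ _

/-- Translation of a positive sentence into a first-order sentence. -/
def PosForm.toSentence (φ : PosForm L 0) : L.Sentence := φ.toBF

theorem PosForm.realize_toSentence (M : Type w) [L.Structure M] (φ : PosForm L 0) :
    M ⊨ φ.toSentence ↔ PosRealize M φ := by
  have := φ.realize_toBF (default : Empty → M) (Fin.elim0 : Fin 0 → M)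
  rw [PosRealize, ← this]
  unfold Sentence.Realize Formula.Realize
  exact iff_of_eq (congrArg _ (Subsingleton.elim _ _))

/-- Translation of a basic h-inductive sentence into a first-order sentence. -/
def HInd.toSentence (s : HInd L) : L.Sentence := (s.hyp.toBF.imp s.concl.toBF).alls

theorem HInd.realize_toSentence (M : Type w) [L.Structure M] (s : HInd L) :
    M ⊨ s.toSentence ↔ s.Realize M := by
  simp [HInd.toSentence, Sentence.Realize, BoundedFormula.realize_alls, HInd.Realize,
    PosForm.realize_toBF]

/-- Homomorphisms preserve positive formulas. -/
theorem PosForm.realize_of_hom {M : Type w} {N : Type w'} [L.Structure M] [L.Structure N]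
    (f : M →[L] N) :
    ∀ {n : ℕ} (φ : PosForm L n) (v : Fin n → M), φ.Realize v → φ.Realize (f ∘ v)
  | _, .falsum, _, h => h
  | _, .equal t u, v, h => by
      simp only [PosForm.Realize] at h ⊢
      rw [HomClass.realize_term, HomClass.realize_term]
      exact congrArg f h
  | _, .rel R ts, v, h => by
      simp only [PosForm.Realize] at h ⊢
      rw [show (fun i => (ts i).realize (f ∘ v)) = f ∘ (fun i => (ts i).realize v) from
        funext fun i => HomClass.realize_term f]
      exact f.map_rel R _ h
  | _, .and φ ψ, v, h => ⟨realize_of_hom f φ v h.1, realize_of_hom f ψ v h.2⟩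
  | _, .or φ ψ, v, h =>
      h.elim (fun h1 => Or.inl (realize_of_hom f φ v h1))
        (fun h2 => Or.inr (realize_of_hom f ψ v h2))
  | _, .ex φ, v, h => by
      obtain ⟨x, hx⟩ := h
      exact ⟨f x, by rw [← Fin.comp_snoc]; exact realize_of_hom f φ _ hx⟩

/-- Iterated existential quantification of a positive formula. -/
def PosForm.exs : ∀ {n : ℕ}, PosForm L n → PosForm L 0
  | 0, φ => φ
  | _ + 1, φ => PosForm.exs φ.ex

theorem PosForm.realize_exs {M : Type w} [L.Structure M] :
    ∀ {n : ℕ} (φ : PosForm L n), PosRealize M φ.exs ↔ ∃ v : Fin n → M, φ.Realize v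
  | 0, φ =>
      ⟨fun h => ⟨Fin.elim0, h⟩, fun ⟨v, hv⟩ => by
        have hv' : φ.Realize (Fin.elim0 : Fin 0 → M) := by
          rwa [show (Fin.elim0 : Fin 0 → M) = v from funext fun i => i.elim0]
        exact hv'⟩
  | n + 1, φ => by
      rw [PosForm.exs, realize_exs φ.ex]
      constructor
      · rintro ⟨v, x, hx⟩
        exact ⟨Fin.snoc v x, hx⟩
      · rintro ⟨v, hv⟩
        exact ⟨Fin.init v, v (Fin.last n), by rwa [Fin.snoc_init_self]⟩

theorem posTransfer {A : Type w} {B : Type w'} [L.Structure A] [L.Structure B]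
    (h : TuStar (L := L) B ⊆ TuStar (L := L) A) {φ : PosForm L 0}
    (hφ : PosRealize A φ) : PosRealize B φ :=
  not_not.1 fun hb => h hb hφ

section Diagram

variable (L) {A : Type w} [L.Structure A]

/-- The atomic diagram sentence expressing that the constant for `funMap F a` is the
image of the constants for `a` under `F`. -/
def funSent {l : ℕ} (F : L.Functions l) (a : Fin l → A) : L[[A]].Sentence :=
  Term.equal (Term.func ((L.lhomWithConstants A).onFunction F) fun i => (L.con (a i)).term)
    ((L.con (funMap F a)).term)

/-- The atomic diagram sentence expressing that `R` holds of the constants for `a`. -/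
def relSent {l : ℕ} (R : L.Relations l) (a : Fin l → A) : L[[A]].Sentence :=
  Relations.formula ((L.lhomWithConstants A).onRelation R) fun i => (L.con (a i)).term

variable {L}

variable (L)

/-- Interpretation of the constants from `A` in a structure. -/
def conInterp (M : Type w') [L[[A]].Structure M] (a : A) : M :=
  constantMap (L.con a)

variable {L}

theorem realize_funSent {M : Type w'} [L.Structure M] [L[[A]].Structure M]
    [(L.lhomWithConstants A).IsExpansionOn M] {l : ℕ} (F : L.Functions l) (a : Fin l → A) :
    M ⊨ funSent L F a ↔ funMap F (fun i => conInterp L M (a i)) = conInterp L M (funMap F a) := by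
  have h3 : ∀ (b : A) (g : Fin 0 → M), funMap (L.con b) g = conInterp L M b :=
    fun b g => congrArg (funMap (L.con b)) (funext fun i => i.elim0)
  simp only [funSent, Sentence.Realize, Formula.realize_equal, Term.realize, h3,
    LHom.map_onFunction, Constants.term]

theorem realize_relSent {M : Type w'} [L.Structure M] [L[[A]].Structure M]
    [(L.lhomWithConstants A).IsExpansionOn M] {l : ℕ} (R : L.Relations l) (a : Fin l → A) :
    M ⊨ relSent L R a ↔ Structure.RelMap R (fun i => conInterp L M (a i)) := by
  have h3 : ∀ (b : A) (g : Fin 0 → M), funMap (L.con b) g = conInterp L M b :=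
    fun b g => congrArg (funMap (L.con b)) (funext fun i => i.elim0)
  simp only [relSent, Sentence.Realize, Formula.realize_rel, Term.realize, h3,
    LHom.map_onRelation, Constants.term]

/-- Index type for the atomic diagram facts of `A`. -/
def Idx (L : FirstOrder.Language.{u, v}) (A : Type w) :=
  (Σ l : ℕ, L.Functions l × (Fin l → A)) ⊕ (Σ l : ℕ, L.Relations l × (Fin l → A))

/-- The diagram sentence associated to an index. -/
def Idx.sent : Idx L A → L[[A]].Sentence
  | .inl ⟨_, F, a⟩ => funSent L F a
  | .inr ⟨_, R, a⟩ => relSent L R a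

/-- Whether the indexed fact holds in `A`. -/
def Idx.holdsA : Idx L A → Prop
  | .inl _ => True
  | .inr ⟨_, R, a⟩ => Structure.RelMap R a

/-- Whether the indexed fact holds in `B` under the interpretation `w`. -/
def Idx.holdsMap {B : Type w'} [L.Structure B] (w : A → B) : Idx L A → Prop
  | .inl ⟨_, F, a⟩ => funMap F (w ∘ a) = w (funMap F a)
  | .inr ⟨_, R, a⟩ => Structure.RelMap R (w ∘ a)

theorem Idx.realize_sent {M : Type w'} [L.Structure M] [L[[A]].Structure M]
    [(L.lhomWithConstants A).IsExpansionOn M] (i : Idx L A) :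
    M ⊨ i.sent ↔ i.holdsMap (conInterp L M) := by
  rcases i with ⟨l, F, a⟩ | ⟨l, R, a⟩
  · rw [Idx.sent, realize_funSent, Idx.holdsMap]; rfl
  · rw [Idx.sent, realize_relSent, Idx.holdsMap]; rfl

/-- The elements of `A` mentioned in an indexed fact. -/
def Idx.mentions [DecidableEq A] : Idx L A → Finset A
  | .inl ⟨_, F, a⟩ => insert (funMap F a) (Finset.univ.image a)
  | .inr ⟨_, R, a⟩ => Finset.univ.image a

/-- The positive formula (with variables indexed by a finite superset `s` of the mentioned
elements) expressing an indexed fact. -/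
noncomputable def Idx.toPos [DecidableEq A] (s : Finset A) :
    (i : Idx L A) → (hi : i.mentions ⊆ s) → PosForm L s.card
  | .inl ⟨_, F, a⟩, hi =>
      .equal
        (Term.func F fun j =>
          Term.var (s.equivFin ⟨a j,
            hi (Finset.mem_insert_of_mem (Finset.mem_image_of_mem a (Finset.mem_univ j)))⟩))
        (Term.var (s.equivFin ⟨funMap F a, hi (Finset.mem_insert_self _ _)⟩))
  | .inr ⟨_, R, a⟩, hi =>
      .rel R fun j =>
        Term.var (s.equivFin ⟨a j, hi (Finset.mem_image_of_mem a (Finset.mem_univ j))⟩)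

theorem Idx.realize_toPos_A [DecidableEq A] (s : Finset A) (i : Idx L A)
    (hi : i.mentions ⊆ s) (hiA : i.holdsA) :
    (i.toPos s hi).Realize (fun j => ((s.equivFin.symm j : s) : A)) := by
  rcases i with ⟨l, F, a⟩ | ⟨l, R, a⟩
  · show funMap F _ = _
    simp [Term.realize]
  · show Structure.RelMap R _
    simp only [Term.realize, Equiv.symm_apply_apply]
    exact hiA

theorem Idx.holdsMap_of_realize_toPos [DecidableEq A] {B : Type w'} [L.Structure B]
    (s : Finset A) (i : Idx L A) (hi : i.mentions ⊆ s) (vB : Fin s.card → B) (w : A → B)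
    (hw : ∀ a, ∀ ha : a ∈ s, w a = vB (s.equivFin ⟨a, ha⟩))
    (hr : (i.toPos s hi).Realize vB) : i.holdsMap w := by
  rcases i with ⟨l, F, a⟩ | ⟨l, R, a⟩
  · show funMap F (w ∘ a) = w (funMap F a)
    simp only [Idx.toPos, PosForm.Realize, Term.realize] at hr
    rw [show w ∘ a = fun j => vB (s.equivFin ⟨a j,
        hi (Finset.mem_insert_of_mem (Finset.mem_image_of_mem a (Finset.mem_univ j)))⟩) from
      funext fun j => hw _ _, hw _ (hi (Finset.mem_insert_self _ _))]
    exact hr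
  · show Structure.RelMap R (w ∘ a)
    simp only [Idx.toPos, PosForm.Realize, Term.realize] at hr
    rwa [show w ∘ a = fun j => vB (s.equivFin ⟨a j,
        hi (Finset.mem_image_of_mem a (Finset.mem_univ j))⟩) from
      funext fun j => hw _ _]

/-- Conjunction of a nonempty collection of positive formulas. -/
def PosForm.conj {n : ℕ} (ψ : PosForm L n) (l : List (PosForm L n)) : PosForm L n :=
  l.foldr .and ψ

theorem PosForm.realize_conj {M : Type w'} [L.Structure M] {n : ℕ} (ψ : PosForm L n)
    (l : List (PosForm L n)) (v : Fin n → M) :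
    (PosForm.conj ψ l).Realize v ↔ ψ.Realize v ∧ ∀ χ ∈ l, χ.Realize v := by
  induction l with
  | nil => simp [PosForm.conj]
  | cons χ l ih =>
      simp only [PosForm.conj, List.foldr_cons, List.mem_cons]
      constructor
      · rintro ⟨h1, h2⟩
        obtain ⟨h3, h4⟩ := ih.1 h2
        exact ⟨h3, fun χ' hχ' => hχ'.elim (fun e => e ▸ h1) (h4 χ')⟩
      · rintro ⟨h1, h2⟩
        exact ⟨h2 χ (Or.inl rfl), ih.2 ⟨h1, fun χ' hχ' => h2 χ' (Or.inr hχ')⟩⟩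

/-- Key transfer lemma: any finite collection of atomic diagram facts of `A` can be
realized in `B`. -/
theorem key_transfer {B : Type w'} [L.Structure B]
    (tr : ∀ ψ : PosForm L 0, PosRealize A ψ → PosRealize B ψ)
    (w₀ : A → B) (G : List (Idx L A)) (hG : ∀ i ∈ G, i.holdsA) :
    ∃ w : A → B, ∀ i ∈ G, i.holdsMap w := by
  classical
  match G, hG with
  | [], _ => exact ⟨w₀, fun i hi => absurd hi List.not_mem_nil⟩
  | i₀ :: G', hG =>
    set G := i₀ :: G' with hGdef
    let s : Finset A := G.foldr (fun i t => i.mentions ∪ t) ∅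
    have hmem : ∀ i ∈ G, i.mentions ⊆ s := by
      have : ∀ (l : List (Idx L A)), ∀ i ∈ l,
          i.mentions ⊆ l.foldr (fun i t => i.mentions ∪ t) ∅ := by
        intro l
        induction l with
        | nil => intro i hi; exact absurd hi List.not_mem_nil
        | cons j l ih =>
            intro i hi
            rcases List.mem_cons.1 hi with rfl | hi
            · exact fun x hx => Finset.mem_union_left _ hx
            · exact fun x hx => Finset.mem_union_right _ (ih i hi hx)
      exact this G
    let base : PosForm L s.card := i₀.toPos s (hmem i₀ List.mem_cons_self)
    let lst : List (PosForm L s.card) :=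
      G.attach.map fun p => p.1.toPos s (hmem p.1 p.2)
    have hA : PosRealize A (PosForm.conj base lst).exs := by
      rw [PosForm.realize_exs]
      refine ⟨fun j => ((s.equivFin.symm j : s) : A), ?_⟩
      rw [PosForm.realize_conj]
      constructor
      · exact Idx.realize_toPos_A s i₀ _ (hG i₀ List.mem_cons_self)
      · intro χ hχ
        simp only [lst, List.mem_map] at hχ
        obtain ⟨⟨i, hi⟩, _, rfl⟩ := hχ
        exact Idx.realize_toPos_A s i _ (hG i hi)
    have hBr := tr _ hA
    rw [PosForm.realize_exs] at hBr
    obtain ⟨vB, hvB⟩ := hBr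
    rw [PosForm.realize_conj] at hvB
    let w : A → B := fun a => if ha : a ∈ s then vB (s.equivFin ⟨a, ha⟩) else w₀ a
    have hw : ∀ a, ∀ ha : a ∈ s, w a = vB (s.equivFin ⟨a, ha⟩) := fun a ha => dif_pos ha
    refine ⟨w, fun i hi => ?_⟩
    have hχ : (i.toPos s (hmem i hi)).Realize vB := by
      rcases List.mem_cons.1 hi with rfl | hi'
      · exact hvB.1
      · exact hvB.2 _ (List.mem_map.2 ⟨⟨i, hi⟩, List.mem_attach _ _, rfl⟩)
    exact Idx.holdsMap_of_realize_toPos s i (hmem i hi) vB w hw hχ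

end Diagram

end Aux

/-- the h-universal theory of a pc model of `T` is minimal among
h-universal theories of models of `T`. -/
theorem TuStar_minimal_of_pc (T : Set (HInd L)) (A : Type (max u v)) [L.Structure A]
    (hA : IsPC T A) (B : Type (max u v)) [L.Structure B] (hB : HModels B T)
    (h : TuStar (L := L) B ⊆ TuStar (L := L) A) : TuStar (L := L) A ⊆ TuStar (L := L) B := by
  classical
  intro φ hφA hφB
  have tr : ∀ ψ : PosForm L 0, PosRealize A ψ → PosRealize B ψ := fun ψ => posTransfer h
  by_cases hAe : Nonempty A
  · -- `A` is nonempty, hence so is `B`.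
    have hBne : Nonempty B := by
      let ψ₁ : PosForm L 0 := PosForm.ex (.equal (Term.var 0) (Term.var 0))
      have hA1 : PosRealize A ψ₁ := by
        simp only [ψ₁, PosRealize, PosForm.Realize]
        exact ⟨Classical.choice hAe, trivial⟩
      have hB1 := tr _ hA1
      simp only [ψ₁] at hB1
      simp only [PosRealize, PosForm.Realize] at hB1
      obtain ⟨b, -⟩ := hB1
      exact ⟨b⟩
    -- The theory `T + Diag⁺(A) + φ` over `L[[A]]`.
    let Tfull : L[[A]].Theory :=
      ((fun s : HInd L => (L.lhomWithConstants A).onSentence s.toSentence) '' T ∪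
          {σ | ∃ i : Idx L A, i.holdsA ∧ i.sent = σ}) ∪
        {(L.lhomWithConstants A).onSentence φ.toSentence}
    have hsat : Tfull.IsSatisfiable := by
      rw [Theory.isSatisfiable_iff_isFinitelySatisfiable]
      intro T0 hT0
      let pick : L[[A]].Sentence → Option (Idx L A) := fun σ =>
        if hσ : ∃ i : Idx L A, i.holdsA ∧ i.sent = σ then some hσ.choose else none
      let G : List (Idx L A) := T0.toList.filterMap pick
      have hG : ∀ i ∈ G, i.holdsA := by
        intro i hi
        simp only [G, List.mem_filterMap] at hi
        obtain ⟨σ, -, hs⟩ := hi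
        by_cases hσ : ∃ i : Idx L A, i.holdsA ∧ i.sent = σ
        · rw [show pick σ = some hσ.choose from dif_pos hσ] at hs
          exact (Option.some.inj hs) ▸ hσ.choose_spec.1
        · rw [show pick σ = none from dif_neg hσ] at hs
          exact absurd hs (by simp)
      obtain ⟨w, hw⟩ := key_transfer tr (fun _ => Classical.choice hBne) G hG
      letI : (constantsOn A).Structure B := constantsOn.structure w
      have hcon : conInterp L B = w := rfl
      haveI : B ⊨ (T0 : L[[A]].Theory) := by
        refine ⟨fun {σ} hσmem => ?_⟩
        have hσT : σ ∈ Tfull := hT0 hσmem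
        rcases hσT with (⟨s, hsT, rfl⟩ | ⟨i, hiA, hisent⟩) | rfl
        · rw [LHom.realize_onSentence, HInd.realize_toSentence]
          exact hB s hsT
        · have hσ : ∃ i' : Idx L A, i'.holdsA ∧ i'.sent = σ := ⟨i, hiA, hisent⟩
          have hiG : hσ.choose ∈ G := by
            refine List.mem_filterMap.2 ⟨σ, Finset.mem_toList.2 hσmem, ?_⟩
            exact dif_pos hσ
          have := hw _ hiG
          rw [← hσ.choose_spec.2, Idx.realize_sent, hcon]
          exact this
        · rw [LHom.realize_onSentence, PosForm.realize_toSentence]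
          exact hφB
      exact Theory.Model.isSatisfiable B
    obtain ⟨MT⟩ := hsat
    let C : Type (max u v) := MT
    letI : L.Structure C := (L.lhomWithConstants A).reduct C
    haveI : (L.lhomWithConstants A).IsExpansionOn C :=
      LHom.isExpansionOn_reduct (L.lhomWithConstants A) C
    have hCmod : ∀ σ ∈ Tfull, C ⊨ σ := fun σ hσ =>
      Theory.realize_sentence_of_mem Tfull hσ
    have hCT : HModels C T := by
      intro s hs
      have := hCmod _ (Set.mem_union_left _ (Set.mem_union_left _ ⟨s, hs, rfl⟩))
      rw [LHom.realize_onSentence, HInd.realize_toSentence] at this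
      exact this
    let f : A →[L] C :=
      { toFun := conInterp L C
        map_fun' := by
          intro n F x
          have := hCmod _ (Set.mem_union_left _ (Set.mem_union_right _
            ⟨Sum.inl ⟨n, F, x⟩, trivial, rfl⟩))
          replace this := (Idx.realize_sent (M := C) _).1 this
          exact this.symm
        map_rel' := by
          intro n r x hx
          have := hCmod _ (Set.mem_union_left _ (Set.mem_union_right _
            ⟨Sum.inr ⟨n, r, x⟩, hx, rfl⟩))
          replace this := (Idx.realize_sent (M := C) _).1 this
          exact this }
    have hCφ : PosRealize C φ := by
      have := hCmod _ (Set.mem_union_right _ rfl)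
      rw [LHom.realize_onSentence, PosForm.realize_toSentence] at this
      exact this
    have himm : IsImmersion f := hA.2 C hCT f
    refine hφA ((himm (n := 0) φ Fin.elim0).2 ?_)
    rwa [show (f : A → C) ∘ Fin.elim0 = (Fin.elim0 : Fin 0 → C) from funext fun i => i.elim0]
  · -- `A` is empty: there is a homomorphism `A → B` directly.
    let f : A →[L] B :=
      { toFun := fun a => (hAe ⟨a⟩).elim
        map_fun' := fun {n} F x => (hAe ⟨Structure.funMap F x⟩).elim
        map_rel' := by
          intro n r x hx
          match n, x with
          | 0, x =>
            have hxA : PosRealize A (PosForm.rel r fun i => (i.elim0 : L.Term (Fin 0))) := by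
              show Structure.RelMap r _
              rw [show (fun i : Fin 0 => Term.realize Fin.elim0 ((i.elim0 : L.Term (Fin 0)))) = x
                from funext fun i => i.elim0]
              exact hx
            have hxB := tr _ hxA
            show Structure.RelMap r _
            rw [show ((fun a => (hAe ⟨a⟩).elim) ∘ x : Fin 0 → B) =
              fun i : Fin 0 => Term.realize Fin.elim0 ((i.elim0 : L.Term (Fin 0)))
              from funext fun i => i.elim0]
            exact hxB
          | n + 1, x => exact (hAe ⟨x 0⟩).elim }
    have himm : IsImmersion f := hA.2 B hB f
    refine hφA ((himm (n := 0) φ Fin.elim0).2 ?_)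
    rwa [show (f : A → B) ∘ Fin.elim0 = (Fin.elim0 : Fin 0 → B) from funext fun i => i.elim0]
end PositiveLogic
end

section
/- Every pc model G of the theory T_g⁺ = (theory of groups) ∪ {a ≠ e}, in the language of groups expanded by a constant a, is a simple group. -/
open FirstOrder FirstOrder.Language

universe u v w w'

namespace PositiveLogic

variable {L : FirstOrder.Language.{u, v}}

/-- The function symbols of the language of groups with an extra constant `a`. -/
inductive GroupFunc : ℕ → Type
  | mul : GroupFunc 2
  | inv : GroupFunc 1
  | one : GroupFunc 0
  | aconst : GroupFunc 0

/-- The language of groups `(·, ⁻¹, e)` expanded by a constant symbol `a`. -/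
def Lg : FirstOrder.Language.{0, 0} :=
  ⟨GroupFunc, fun _ => Empty⟩

/-- Term-building helpers. -/
def tmul {α : Type} (t u : Lg.Term α) : Lg.Term α :=
  FirstOrder.Language.Term.func (GroupFunc.mul : Lg.Functions 2) ![t, u]

def tinv {α : Type} (t : Lg.Term α) : Lg.Term α :=
  FirstOrder.Language.Term.func (GroupFunc.inv : Lg.Functions 1) ![t]

def tone {α : Type} : Lg.Term α :=
  FirstOrder.Language.Term.func (GroupFunc.one : Lg.Functions 0) ![]

def ta {α : Type} : Lg.Term α :=
  FirstOrder.Language.Term.func (GroupFunc.aconst : Lg.Functions 0) ![]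

open FirstOrder.Language.Term in
/-- `T_g⁺`: the h-inductive theory of groups together with `a ≠ e`
(expressed h-inductively as `(a = e) → ⊥`). -/
def Tgplus : Set (HInd Lg) :=
  { -- associativity
    ⟨3, PosForm.equal (var 0) (var 0),
      PosForm.equal (tmul (tmul (var 0) (var 1)) (var 2))
        (tmul (var 0) (tmul (var 1) (var 2)))⟩,
    -- left and right identity
    ⟨1, PosForm.equal (var 0) (var 0), PosForm.equal (tmul tone (var 0)) (var 0)⟩,
    ⟨1, PosForm.equal (var 0) (var 0), PosForm.equal (tmul (var 0) tone) (var 0)⟩,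
    -- left and right inverse
    ⟨1, PosForm.equal (var 0) (var 0), PosForm.equal (tmul (tinv (var 0)) (var 0)) tone⟩,
    ⟨1, PosForm.equal (var 0) (var 0), PosForm.equal (tmul (var 0) (tinv (var 0))) tone⟩,
    -- a ≠ e
    ⟨0, PosForm.equal ta tone, PosForm.falsum⟩ }

namespace PCPerm
open Equiv

variable {Ω : Type} {Ω' : Type}

def IsUniform (π : Equiv.Perm Ω) (e : ℕ) : Prop :=
  ∀ (x : Ω) (m : ℤ), (π ^ m) x = x ↔ (e : ℤ) ∣ m

lemma isUniform_of_nat {π : Equiv.Perm Ω} {e : ℕ}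
    (H : ∀ (x : Ω) (m : ℕ), (π ^ m) x = x ↔ e ∣ m) : IsUniform π e := by
  intro x m
  induction m using Int.induction_on with
  | zero => simpa using (H x 0).mpr (dvd_zero e)
  | succ n _ =>
      rw [show ((n:ℤ)+1) = ((n+1 : ℕ) : ℤ) by push_cast; ring, zpow_natCast]
      rw [H x (n+1)]
      exact_mod_cast (Int.natCast_dvd_natCast (m := e) (n := n+1)).symm
  | pred n _ =>
      rw [show (-(n:ℤ)-1) = -((n+1 : ℕ) : ℤ) by push_cast; ring, zpow_neg, zpow_natCast]
      have : (π ^ (n+1))⁻¹ x = x ↔ (π ^ (n+1)) x = x := by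
        constructor
        · intro h; conv_lhs => rw [← h]
          simp
        · intro h; conv_lhs => rw [← h]; simp
      rw [this, H x (n+1)]
      rw [Int.dvd_neg]
      exact_mod_cast (Int.natCast_dvd_natCast (m := e) (n := n+1)).symm

def orbSetoid (π : Equiv.Perm Ω) : Setoid Ω :=
  ⟨fun x y => ∃ m : ℤ, (π ^ m) x = y,
   ⟨fun x => ⟨0, rfl⟩,
    fun ⟨m, hm⟩ => ⟨-m, by rw [← hm]; simp [← Equiv.Perm.mul_apply, ← zpow_add]⟩,
    fun ⟨m, hm⟩ ⟨k, hk⟩ => ⟨k + m, by rw [← hk, ← hm]; simp [← Equiv.Perm.mul_apply, ← zpow_add]⟩⟩⟩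

def OrbQ (π : Equiv.Perm Ω) : Type _ := Quotient (orbSetoid π)

def qshift (π : Equiv.Perm Ω) (e : ℕ) : Equiv.Perm (OrbQ π × ZMod e) :=
  Equiv.prodCongr (Equiv.refl _) (Equiv.addRight (1 : ZMod e))

lemma qshift_apply (π : Equiv.Perm Ω) (e : ℕ) (q : OrbQ π) (k : ZMod e) :
    qshift π e (q, k) = (q, k + 1) := rfl

lemma exists_rep (π : Equiv.Perm Ω) (x : Ω) :
    ∃ m : ℤ, (π ^ m) (Quotient.out (s := orbSetoid π) (Quotient.mk _ x)) = x :=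
  Quotient.mk_out (s := orbSetoid π) x

noncomputable def expOf (π : Equiv.Perm Ω) (x : Ω) : ℤ := (exists_rep π x).choose

lemma expOf_spec (π : Equiv.Perm Ω) (x : Ω) :
    (π ^ expOf π x) (Quotient.out (s := orbSetoid π) (Quotient.mk _ x)) = x :=
  (exists_rep π x).choose_spec

lemma cast_eq_of_pow_eq {π : Equiv.Perm Ω} {e : ℕ} (hu : IsUniform π e) {z : Ω} {a b : ℤ}
    (h : (π ^ a) z = (π ^ b) z) : ((a : ZMod e) = (b : ZMod e)) := by
  have h2 : (π ^ (a - b)) z = z := by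
    calc (π ^ (a - b)) z = ((π ^ (-b)) * (π ^ a)) z := by
          rw [← zpow_add]; ring_nf
    _ = (π ^ (-b)) ((π ^ b) z) := by rw [← h]; simp [Equiv.Perm.mul_apply]
    _ = z := by simp [← Equiv.Perm.mul_apply, ← zpow_add]
  have := (hu z _).mp h2
  have h3 : ((a - b : ℤ) : ZMod e) = 0 := (CharP.intCast_eq_zero_iff (ZMod e) e _).mpr this
  push_cast at h3
  linear_combination h3

/-- L1 : canonical decomposition of a uniform permutation -/
lemma decomp {π : Equiv.Perm Ω} {e : ℕ} (hu : IsUniform π e) :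
    ∃ F : Ω ≃ (OrbQ π × ZMod e), ∀ x, F (π x) = (qshift π e) (F x) := by
  classical
  set θ : Ω → OrbQ π × ZMod e := fun x => (Quotient.mk _ x, ((expOf π x : ℤ) : ZMod e)) with hθ
  have key : ∀ x y : Ω, Quotient.mk (orbSetoid π) x = Quotient.mk (orbSetoid π) y →
      ((expOf π x : ZMod e) = (expOf π y : ZMod e)) → x = y := by
    intro x y hq hmm
    have hm := expOf_spec π x
    have hm' := expOf_spec π y
    rw [hq] at hm
    have hdvd : (e : ℤ) ∣ expOf π x - expOf π y := by
      have : ((expOf π x - expOf π y : ℤ) : ZMod e) = 0 := by push_cast; rw [hmm]; ring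
      exact (CharP.intCast_eq_zero_iff (ZMod e) e _).mp this
    calc x = (π ^ expOf π x) (Quotient.out (s := orbSetoid π) (Quotient.mk _ y)) := hm.symm
    _ = (π ^ (expOf π x - expOf π y)) ((π ^ expOf π y)
          (Quotient.out (s := orbSetoid π) (Quotient.mk _ y))) := by
        simp [← Equiv.Perm.mul_apply, ← zpow_add]
    _ = (π ^ (expOf π x - expOf π y)) y := by rw [hm']
    _ = y := (hu y _).mpr hdvd
  have hbij : Function.Bijective θ := by
    constructor
    · intro x y hxy
      exact key x y (congrArg Prod.fst hxy) (congrArg Prod.snd hxy)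
    · rintro ⟨q, k⟩
      obtain ⟨m, hm⟩ := ZMod.intCast_surjective (n := e) k
      refine ⟨(π ^ m) (Quotient.out (s := orbSetoid π) q), ?_⟩
      have hq : Quotient.mk (orbSetoid π) ((π ^ m) (Quotient.out (s := orbSetoid π) q)) = q := by
        conv_rhs => rw [← Quotient.out_eq (s := orbSetoid π) q]
        refine Quotient.sound ⟨-m, by simp [← Equiv.Perm.mul_apply, ← zpow_add]⟩
      have hx := expOf_spec π ((π ^ m) (Quotient.out (s := orbSetoid π) q))
      rw [hq] at hx
      have : ((expOf π ((π ^ m) (Quotient.out (s := orbSetoid π) q)) : ZMod e) = (m : ZMod e)) :=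
        cast_eq_of_pow_eq hu hx
      rw [hθ]; dsimp only
      rw [hq, this, hm]
  refine ⟨Equiv.ofBijective θ hbij, ?_⟩
  intro x
  simp only [Equiv.ofBijective_apply, hθ]
  have hq : Quotient.mk (orbSetoid π) (π x) = Quotient.mk (orbSetoid π) x :=
    Quotient.sound ⟨-1, by simp [← Equiv.Perm.mul_apply, ← zpow_add]⟩
  show _ = ((Quotient.mk (orbSetoid π) x : OrbQ π), ((expOf π x : ℤ) : ZMod e) + 1)
  refine Prod.ext hq ?_
  have hx := expOf_spec π (π x)
  rw [hq] at hx
  have hx2 : (π ^ (expOf π x + 1)) (Quotient.out (s := orbSetoid π) (Quotient.mk _ x)) = π x := by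
    rw [show expOf π x + 1 = 1 + expOf π x from by ring, zpow_add]
    simp only [Equiv.Perm.mul_apply, zpow_one]
    rw [expOf_spec π x]
  have := cast_eq_of_pow_eq hu (hx.trans hx2.symm)
  push_cast at this
  simpa using this


/-- L2: two uniform permutations with equipollent orbit spaces are equivariantly isomorphic. -/
lemma matching {π₁ : Equiv.Perm Ω} {π₂ : Equiv.Perm Ω'} {e : ℕ}
    (h₁ : IsUniform π₁ e) (h₂ : IsUniform π₂ e)
    (hq : Nonempty (OrbQ π₁ ≃ OrbQ π₂)) :
    ∃ F : Ω ≃ Ω', ∀ x, F (π₁ x) = π₂ (F x) := by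
  obtain ⟨F₁, hF₁⟩ := decomp h₁
  obtain ⟨F₂, hF₂⟩ := decomp h₂
  obtain ⟨E⟩ := hq
  refine ⟨F₁.trans ((Equiv.prodCongr E (Equiv.refl (ZMod e))).trans F₂.symm), ?_⟩
  intro x
  simp only [Equiv.trans_apply, hF₁ x]
  obtain ⟨q, k⟩ := F₁ x
  have : F₂ (π₂ (F₂.symm (E q, k))) = qshift π₂ e (F₂ (F₂.symm (E q, k))) := hF₂ _
  rw [Equiv.apply_symm_apply] at this
  have h2 : π₂ (F₂.symm (E q, k)) = F₂.symm (E q, k + 1) := by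
    apply F₂.injective
    rw [this, Equiv.apply_symm_apply, qshift_apply]
  simp only [qshift_apply, Equiv.prodCongr_apply, Prod.map, Equiv.refl_apply]
  rw [h2]

lemma isUniform_prodCongr_refl {π : Equiv.Perm Ω} {e : ℕ} (hu : IsUniform π e) (W : Type) :
    IsUniform (Equiv.prodCongr π (Equiv.refl W)) e := by
  have hpow : ∀ m : ℤ, (Equiv.prodCongr π (Equiv.refl W)) ^ m
      = Equiv.prodCongr (π ^ m) (Equiv.refl W) := by
    intro m
    induction m using Int.induction_on with
    | zero => ext ⟨p, w⟩ <;> simp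
    | succ n ih => rw [zpow_add, zpow_add, ih]; ext ⟨p, w⟩ <;> simp [Equiv.Perm.mul_apply]
    | pred n ih => rw [sub_eq_add_neg, zpow_add, zpow_add, ih]; ext ⟨p, w⟩ <;>
        simp [Equiv.Perm.mul_apply, Equiv.Perm.inv_def, Equiv.prodCongr_symm]
  intro x m
  rw [hpow m]
  obtain ⟨p, w⟩ := x
  constructor
  · intro h
    exact (hu p m).mp (congrArg Prod.fst h)
  · intro h
    simp only [Equiv.prodCongr_apply, Prod.map, Equiv.refl_apply]
    rw [(hu p m).mpr h]

/-- orbit space of π ⊗ id  -/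
lemma orbq_prod_equiv (π : Equiv.Perm Ω) (W : Type) :
    Nonempty (OrbQ (Equiv.prodCongr π (Equiv.refl W)) ≃ OrbQ π × W) := by
  have hpow : ∀ m : ℤ, ∀ p w, ((Equiv.prodCongr π (Equiv.refl W)) ^ m) (p, w)
      = ((π ^ m) p, w) := by
    intro m
    induction m using Int.induction_on with
    | zero => intro p w; simp
    | succ n ih => intro p w
                   rw [zpow_add, zpow_add]
                   simp only [Equiv.Perm.mul_apply, zpow_one, Equiv.prodCongr_apply, Prod.map,
                     Equiv.refl_apply, ih]
    | pred n ih => intro p w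
                   rw [sub_eq_add_neg, zpow_add, zpow_add]
                   have : ((Equiv.prodCongr π (Equiv.refl W)) ^ (-1 : ℤ)) (p, w)
                       = ((π ^ (-1 : ℤ)) p, w) := by
                     apply Equiv.injective ((Equiv.prodCongr π (Equiv.refl W)) ^ (1:ℤ))
                     simp only [← Equiv.Perm.mul_apply, ← zpow_add]
                     norm_num
                   simp only [Equiv.Perm.mul_apply, this, ih]
  refine ⟨Equiv.ofBijective (Quotient.lift
    (fun (x : Ω × W) => ((Quotient.mk (orbSetoid π) x.1 : OrbQ π), x.2)) ?_) ⟨?_, ?_⟩⟩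
  · rintro ⟨p, w⟩ ⟨p', w'⟩ ⟨m, hm⟩
    rw [hpow m p w] at hm
    have h1 : (π ^ m) p = p' := congrArg Prod.fst hm
    have h2 : w = w' := congrArg Prod.snd hm
    rw [h2]
    exact congrArg (fun q => (q, w')) (Quotient.sound ⟨m, h1⟩)
  · rintro ⟨x⟩ ⟨y⟩ h
    obtain ⟨p, w⟩ := x; obtain ⟨p', w'⟩ := y
    have h1 : Quotient.mk (orbSetoid π) p = Quotient.mk (orbSetoid π) p' :=
      congrArg Prod.fst h
    have h2 : w = w' := congrArg Prod.snd h
    obtain ⟨m, hm⟩ := Quotient.exact h1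
    exact Quotient.sound ⟨m, by rw [hpow m p w, hm, h2]⟩
  · rintro ⟨q, w⟩
    obtain ⟨p, hp⟩ := Quotient.exists_rep q
    exact ⟨Quotient.mk _ (p, w), by simp [hp]⟩


section SCon

variable (c d : ℕ)

/-- the countable pattern space -/
abbrev SP := (ZMod c →₀ ZMod d) × ZMod c

/-- the basic "two-entry" bump at position k -/
noncomputable def sh (k : ZMod c) : ZMod c →₀ ZMod d :=
  Finsupp.single k 1 - Finsupp.single (k + 1) 1

/-- X : shift in second coordinate -/
def XP : Equiv.Perm (SP c d) := Equiv.prodCongr (Equiv.refl _) (Equiv.addRight (1 : ZMod c))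

/-- T : add the bump indexed by second coordinate -/
noncomputable def TP : Equiv.Perm (SP c d) where
  toFun := fun p => (p.1 + sh c d p.2, p.2)
  invFun := fun p => (p.1 - sh c d p.2, p.2)
  left_inv := fun p => by simp
  right_inv := fun p => by simp

/-- Y is whatever makes X * Y = T -/
noncomputable def YP : Equiv.Perm (SP c d) := (XP c d)⁻¹ * TP c d

lemma XP_mul_YP : XP c d * YP c d = TP c d := by
  rw [YP]; group

lemma YP_apply (v : ZMod c →₀ ZMod d) (k : ZMod c) :
    YP c d (v, k) = (v + sh c d k, k - 1) := by
  simp only [YP, TP, XP, Equiv.Perm.mul_apply]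
  simp [Equiv.Perm.inv_def, Equiv.prodCongr_symm, sub_eq_add_neg]

lemma XP_pow (m : ℕ) (v : ZMod c →₀ ZMod d) (k : ZMod c) :
    ((XP c d) ^ m) (v, k) = (v, k + m) := by
  induction m generalizing v k with
  | zero => simp
  | succ n ih => rw [pow_succ, Equiv.Perm.mul_apply, show (XP c d) (v,k) = (v, k+1) from rfl,
                   ih]
                 refine Prod.ext rfl ?_
                 push_cast
                 ring

lemma TP_pow (m : ℕ) (v : ZMod c →₀ ZMod d) (k : ZMod c) :
    ((TP c d) ^ m) (v, k) = (v + m • sh c d k, k) := by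
  induction m generalizing v k with
  | zero => simp
  | succ n ih => rw [pow_succ, Equiv.Perm.mul_apply,
                   show (TP c d) (v,k) = (v + sh c d k, k) from rfl, ih, succ_nsmul]
                 refine Prod.ext ?_ rfl
                 dsimp only
                 abel

lemma YP_pow (m : ℕ) (v : ZMod c →₀ ZMod d) (k : ZMod c) :
    ((YP c d) ^ m) (v, k)
      = (v + Finsupp.single (k - m + 1) 1 - Finsupp.single (k + 1) 1, k - m) := by
  induction m generalizing v k with
  | zero => simp
  | succ n ih =>
      rw [pow_succ, Equiv.Perm.mul_apply, YP_apply, ih]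
      refine Prod.ext ?_ ?_
      · dsimp only
        rw [sh]
        have h1 : k - 1 - (n : ZMod c) + 1 = k - ((n:ℕ)+1 : ℕ) + 1 := by push_cast; ring
        have h2 : k - 1 + 1 = k := by ring
        rw [h1, h2]
        abel
      · dsimp only
        push_cast
        ring

variable {c d : ℕ}

lemma one_ne_zero_zmod (hc : c ≠ 1) : (1 : ZMod c) ≠ 0 := by
  intro h
  have : ((1:ℕ) : ZMod c) = 0 := by exact_mod_cast h
  have := (CharP.cast_eq_zero_iff (ZMod c) c 1).mp this
  exact hc (Nat.dvd_one.mp this)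

lemma sh_apply_self (hc : c ≠ 1) (k : ZMod c) : (sh c d k) k = 1 := by
  have hne : ¬ (k + 1 = k) := by
    intro h
    exact one_ne_zero_zmod hc (by linear_combination h)
  simp [sh, Finsupp.sub_apply, Finsupp.single_apply, hne]

lemma isUniform_XP : IsUniform (XP c d) c := by
  apply isUniform_of_nat
  intro ⟨v, k⟩ m
  rw [XP_pow]
  constructor
  · intro h
    have h2 : k + (m : ZMod c) = k := congrArg Prod.snd h
    have : ((m:ℕ) : ZMod c) = 0 := by linear_combination h2
    exact (CharP.cast_eq_zero_iff (ZMod c) c m).mp this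
  · intro h
    have : ((m:ℕ) : ZMod c) = 0 := (CharP.cast_eq_zero_iff (ZMod c) c m).mpr h
    rw [this, add_zero]

lemma isUniform_YP : IsUniform (YP c d) c := by
  apply isUniform_of_nat
  intro ⟨v, k⟩ m
  rw [YP_pow]
  constructor
  · intro h
    have h2 : k - (m : ZMod c) = k := congrArg Prod.snd h
    have : ((m:ℕ) : ZMod c) = 0 := by linear_combination -h2
    exact (CharP.cast_eq_zero_iff (ZMod c) c m).mp this
  · intro h
    have h0 : ((m:ℕ) : ZMod c) = 0 := (CharP.cast_eq_zero_iff (ZMod c) c m).mpr h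
    rw [h0]
    simp

lemma isUniform_TP (hc : c ≠ 1) : IsUniform (TP c d) d := by
  apply isUniform_of_nat
  intro ⟨v, k⟩ m
  rw [TP_pow]
  constructor
  · intro h
    have h2 : v + m • sh c d k = v := congrArg Prod.fst h
    have h3 : m • sh c d k = 0 := by
      have := h2
      rwa [add_eq_left] at this
    have h4 := congrArg (fun f => f k) h3
    simp only [Finsupp.smul_apply, Finsupp.coe_zero, Pi.zero_apply] at h4
    rw [sh_apply_self hc] at h4
    have : ((m:ℕ) : ZMod d) = 0 := by
      rw [← h4, nsmul_eq_mul, mul_one]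
    exact (CharP.cast_eq_zero_iff (ZMod d) d m).mp this
  · intro h
    have h0 : ((m:ℕ) : ZMod d) = 0 := (CharP.cast_eq_zero_iff (ZMod d) d m).mpr h
    have : m • sh c d k = 0 := by
      rw [sh, smul_sub, Finsupp.smul_single, Finsupp.smul_single]
      have : m • (1 : ZMod d) = 0 := by rw [nsmul_eq_mul, mul_one, h0]
      rw [this]
      simp
    rw [this, add_zero]

end SCon


section GroupSide

open Cardinal

variable {G : Type} [Group G]

lemma mulRight_zpow (u : G) (m : ℤ) :
    (Equiv.mulRight u : Equiv.Perm G) ^ m = Equiv.mulRight (u ^ m) := by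
  induction m using Int.induction_on with
  | zero => ext x; simp
  | succ n ih => rw [zpow_add, ih, zpow_add]; ext x
                 simp only [Equiv.Perm.mul_apply, Equiv.coe_mulRight, zpow_one, zpow_natCast]
                 rw [mul_assoc, pow_mul_comm']
  | pred n ih => rw [sub_eq_add_neg, zpow_add, ih, zpow_add]; ext x
                 simp only [Equiv.Perm.mul_apply, Equiv.Perm.inv_def, Equiv.mulRight_symm,
                   Equiv.coe_mulRight, zpow_neg, zpow_one, zpow_natCast]
                 rw [mul_assoc, ← inv_pow, pow_mul_comm']

lemma isUniform_mulRight (u : G) : IsUniform (Equiv.mulRight u : Equiv.Perm G) (orderOf u) := by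
  intro x m
  rw [mulRight_zpow]
  simp only [Equiv.coe_mulRight]
  constructor
  · intro hxm
    have : u ^ m = 1 := by
      have := mul_left_cancel (a := x) (b := u ^ m) (c := 1) (by rw [mul_one]; exact hxm)
      exact this
    exact orderOf_dvd_iff_zpow_eq_one.mpr this
  · intro hd
    rw [orderOf_dvd_iff_zpow_eq_one.mp hd, mul_one]

/-- the homomorphism G →* Perm (G × ℤ), by right division on the first factor -/
def rrAct : G →* Equiv.Perm (G × ℤ) where
  toFun g := Equiv.prodCongr (Equiv.mulRight g⁻¹) (Equiv.refl ℤ)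
  map_one' := by ext ⟨x, n⟩ <;> simp
  map_mul' a b := by
    ext ⟨x, n⟩ <;> simp [Equiv.Perm.mul_apply, mul_assoc]

lemma rrAct_apply (g : G) (x : G) (n : ℤ) : rrAct g (x, n) = (x * g⁻¹, n) := rfl

lemma isUniform_rrAct (g : G) : IsUniform (rrAct g) (orderOf g) := by
  have := isUniform_prodCongr_refl (isUniform_mulRight g⁻¹) ℤ
  rwa [orderOf_inv] at this

lemma rrAct_def (g : G) :
    (rrAct g : Equiv.Perm (G × ℤ)) = Equiv.prodCongr (Equiv.mulRight g⁻¹) (Equiv.refl ℤ) := rfl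

lemma card_orbq_rrAct (g : G) : #(OrbQ (rrAct g)) = #(G × ℤ) := by
  obtain ⟨E⟩ := orbq_prod_equiv (Equiv.mulRight g⁻¹ : Equiv.Perm G) ℤ
  have h1 : #(OrbQ (rrAct g)) = #(OrbQ (Equiv.mulRight g⁻¹ : Equiv.Perm G)) * ℵ₀ := by
    rw [rrAct_def, Cardinal.mk_congr E]
    simp [Cardinal.mk_prod, Cardinal.mk_int]
  obtain ⟨D, hD⟩ := decomp (isUniform_mulRight (g⁻¹ : G))
  have h2 : #G = #(OrbQ (Equiv.mulRight g⁻¹ : Equiv.Perm G)) * #(ZMod (orderOf g⁻¹)) := by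
    rw [Cardinal.mk_congr D]
    simp [Cardinal.mk_prod]
  have h3 : #(ZMod (orderOf g⁻¹)) ≤ ℵ₀ := by
    have : Countable (ZMod (orderOf g⁻¹)) := by
      rcases (orderOf g⁻¹) with _ | n
      · exact (inferInstance : Countable ℤ)
      · infer_instance
    exact Cardinal.mk_le_aleph0
  have h4 : #(G × ℤ) = #G * ℵ₀ := by simp [Cardinal.mk_prod, Cardinal.mk_int]
  rw [h1, h4]
  apply le_antisymm
  · exact mul_le_mul_left (Cardinal.mk_quotient_le) _
  · have s1 : #G * ℵ₀ = #(OrbQ (Equiv.mulRight g⁻¹ : Equiv.Perm G)) * #(ZMod (orderOf g⁻¹)) * ℵ₀ :=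
      congrArg (· * ℵ₀) h2
    have s2 : #(OrbQ (Equiv.mulRight g⁻¹ : Equiv.Perm G)) * #(ZMod (orderOf g⁻¹)) * ℵ₀
        ≤ #(OrbQ (Equiv.mulRight g⁻¹ : Equiv.Perm G)) * ℵ₀ * ℵ₀ :=
      mul_le_mul_left (mul_le_mul_right h3 _) _
    have s3 : #(OrbQ (Equiv.mulRight g⁻¹ : Equiv.Perm G)) * ℵ₀ * ℵ₀
        = #(OrbQ (Equiv.mulRight g⁻¹ : Equiv.Perm G)) * ℵ₀ := by
      rw [mul_assoc, Cardinal.aleph0_mul_aleph0]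
    rw [s1]
    exact s2.trans_eq s3

lemma card_orbq_small (B : Type) [Countable B] [Nonempty B] (ρ : Equiv.Perm B) :
    #(OrbQ (Equiv.prodCongr ρ (Equiv.refl (G × ℤ)))) = #(G × ℤ) := by
  obtain ⟨E⟩ := orbq_prod_equiv ρ (G × ℤ)
  have h1 : #(OrbQ (Equiv.prodCongr ρ (Equiv.refl (G × ℤ)))) = #(OrbQ ρ) * #(G × ℤ) := by
    rw [Cardinal.mk_congr E]; simp [Cardinal.mk_prod]
  rw [h1]
  have hle : #(OrbQ ρ) ≤ ℵ₀ := by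
    have : Countable (OrbQ ρ) := Quotient.countable
    exact Cardinal.mk_le_aleph0
  have hge : (1 : Cardinal) ≤ #(OrbQ ρ) := by
    have : Nonempty (OrbQ ρ) := by
      obtain ⟨b⟩ := (inferInstance : Nonempty B)
      exact ⟨Quotient.mk _ b⟩
    exact Cardinal.one_le_iff_ne_zero.mpr (Cardinal.mk_ne_zero (OrbQ ρ))
  apply le_antisymm
  · have s1 : #(OrbQ ρ) * #(G × ℤ) ≤ ℵ₀ * #(G × ℤ) := mul_le_mul_left hle _
    have s2 : ℵ₀ * #(G × ℤ) = #(G × ℤ) := by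
      have hW : #(G × ℤ) = #G * ℵ₀ := by simp [Cardinal.mk_prod, Cardinal.mk_int]
      rw [hW, ← mul_assoc, mul_comm ℵ₀ (#G), mul_assoc, Cardinal.aleph0_mul_aleph0]
    exact s1.trans_eq s2
  · have := mul_le_mul_left hge (#(G × ℤ))
    rwa [one_mul] at this

/-- MAIN PERMUTATION THEOREM -/
theorem exists_two_conj (g h : G) (hg : g ≠ 1) :
    ∃ w₁ w₂ : Equiv.Perm (G × ℤ),
      rrAct h = (w₁ * rrAct g * w₁⁻¹) * (w₂ * rrAct g * w₂⁻¹) := by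
  classical
  set c := orderOf g with hc
  set d := orderOf h with hd
  have hc1 : c ≠ 1 := by
    rw [hc]; intro hcc; exact hg (orderOf_eq_one_iff.mp hcc)
  haveI : Countable (SP c d) := by
    have h1 : Countable (ZMod c) := by
      rcases c with _ | n
      · exact (inferInstance : Countable ℤ)
      · infer_instance
    have h2 : Countable (ZMod d) := by
      rcases d with _ | n
      · exact (inferInstance : Countable ℤ)
      · infer_instance
    infer_instance
  haveI : Nonempty (SP c d) := by
    have h1 : Nonempty (ZMod c) := by
      rcases c with _ | n
      · exact (inferInstance : Nonempty ℤ)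
      · infer_instance
    exact inferInstance
  set Ω := G × ℤ
  set σ := rrAct g with hσ
  set τ := rrAct h with hτ
  set XΛ := Equiv.prodCongr (XP c d) (Equiv.refl Ω) with hXΛ
  set YΛ := Equiv.prodCongr (YP c d) (Equiv.refl Ω) with hYΛ
  set TΛ := Equiv.prodCongr (TP c d) (Equiv.refl Ω) with hTΛ
  -- matching F : SP × Ω ≃ Ω carrying TΛ to τ
  obtain ⟨F, hF⟩ := matching (isUniform_prodCongr_refl (isUniform_TP hc1) Ω) (isUniform_rrAct h)
    (Cardinal.eq.mp ((card_orbq_small _ _).trans (card_orbq_rrAct h).symm))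
  obtain ⟨Ex, hEx⟩ := matching (isUniform_rrAct g)
    (isUniform_prodCongr_refl (isUniform_XP (c := c) (d := d)) Ω)
    (Cardinal.eq.mp ((card_orbq_rrAct g).trans (card_orbq_small _ (XP c d)).symm))
  obtain ⟨Ey, hEy⟩ := matching (isUniform_rrAct g)
    (isUniform_prodCongr_refl (isUniform_YP (c := c) (d := d)) Ω)
    (Cardinal.eq.mp ((card_orbq_rrAct g).trans (card_orbq_small _ (YP c d)).symm))
  refine ⟨(Ex.trans F : Equiv.Perm Ω), (Ey.trans F : Equiv.Perm Ω), ?_⟩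
  have hXY : ∀ z, XΛ (YΛ z) = TΛ z := by
    rintro ⟨s, w⟩
    have : XP c d (YP c d s) = TP c d s := by
      rw [← XP_mul_YP c d]; rfl
    simp [hXΛ, hYΛ, hTΛ, this]
  refine Equiv.ext fun x => ?_
  have e1 : ∀ z, σ (Ex.symm z) = Ex.symm (XΛ z) := by
    intro z
    apply Ex.injective
    rw [hEx, Equiv.apply_symm_apply, Equiv.apply_symm_apply]
  have e2 : ∀ z, σ (Ey.symm z) = Ey.symm (YΛ z) := by
    intro z
    apply Ey.injective
    rw [hEy, Equiv.apply_symm_apply, Equiv.apply_symm_apply]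
  show τ x = _
  simp only [Equiv.Perm.mul_apply, Equiv.Perm.inv_def, Equiv.symm_trans_apply,
    Equiv.trans_apply]
  rw [e2, Equiv.apply_symm_apply, Equiv.symm_apply_apply, e1, Equiv.apply_symm_apply, hXY]
  have h5 := hF (F.symm x)
  rw [Equiv.apply_symm_apply] at h5
  rw [← h5]

end GroupSide

end PCPerm


section LogicLayer

open FirstOrder.Language

/-- canonical interpretation of `a` in a structure -/
noncomputable abbrev aOf (M : Type) [Lg.Structure M] : M :=
  Structure.funMap (L := Lg) (GroupFunc.aconst : Lg.Functions 0) ![]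

/-- the Lg-structure on a group with chosen constant -/
def grpS (H : Type) [Group H] (aH : H) : Lg.Structure H where
  funMap := fun {n} f => match f with
    | GroupFunc.mul => fun v => v 0 * v 1
    | GroupFunc.inv => fun v => (v 0)⁻¹
    | GroupFunc.one => fun _ => 1
    | GroupFunc.aconst => fun _ => aH
  RelMap := fun {n} r _ => Empty.elim r

section RealizeHelpers

variable {M : Type} [Lg.Structure M] [Group M]

lemma funMap_mul_eq
    (hmul : ∀ x y : M, x * y = Structure.funMap (L := Lg) (GroupFunc.mul : Lg.Functions 2) ![x, y])
    (x : Fin 2 → M) :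
    Structure.funMap (L := Lg) (GroupFunc.mul : Lg.Functions 2) x = x 0 * x 1 := by
  rw [hmul (x 0) (x 1)]
  congr 1
  funext i
  fin_cases i <;> rfl

lemma funMap_one_eq
    (hone : (1 : M) = Structure.funMap (L := Lg) (GroupFunc.one : Lg.Functions 0) ![])
    (x : Fin 0 → M) :
    Structure.funMap (L := Lg) (GroupFunc.one : Lg.Functions 0) x = 1 := by
  rw [hone]
  congr 1
  funext i
  exact i.elim0

lemma funMap_inv_eq
    (hinv : ∀ x : M, x⁻¹ = Structure.funMap (L := Lg) (GroupFunc.inv : Lg.Functions 1) ![x])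
    (x : Fin 1 → M) :
    Structure.funMap (L := Lg) (GroupFunc.inv : Lg.Functions 1) x = (x 0)⁻¹ := by
  rw [hinv (x 0)]
  congr 1
  funext i
  fin_cases i <;> rfl

lemma funMap_a_eq (x : Fin 0 → M) :
    Structure.funMap (L := Lg) (GroupFunc.aconst : Lg.Functions 0) x = aOf M := by
  show _ = Structure.funMap (L := Lg) _ _
  congr 1
  funext i
  exact i.elim0

variable {n : ℕ}

lemma realize_tmul
    (hmul : ∀ x y : M, x * y = Structure.funMap (L := Lg) (GroupFunc.mul : Lg.Functions 2) ![x, y])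
    (t u : Lg.Term (Fin n)) (v : Fin n → M) :
    (tmul t u).realize v = t.realize v * u.realize v := by
  show Structure.funMap (L := Lg) (GroupFunc.mul : Lg.Functions 2) _ = _
  rw [funMap_mul_eq hmul]
  simp

lemma realize_tinv
    (hinv : ∀ x : M, x⁻¹ = Structure.funMap (L := Lg) (GroupFunc.inv : Lg.Functions 1) ![x])
    (t : Lg.Term (Fin n)) (v : Fin n → M) :
    (tinv t).realize v = (t.realize v)⁻¹ := by
  show Structure.funMap (L := Lg) (GroupFunc.inv : Lg.Functions 1) _ = _
  rw [funMap_inv_eq hinv]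
  simp

lemma realize_tone
    (hone : (1 : M) = Structure.funMap (L := Lg) (GroupFunc.one : Lg.Functions 0) ![])
    (v : Fin n → M) : (tone : Lg.Term (Fin n)).realize v = 1 := by
  show Structure.funMap (L := Lg) (GroupFunc.one : Lg.Functions 0) _ = _
  rw [funMap_one_eq hone]

lemma realize_ta (v : Fin n → M) : (ta : Lg.Term (Fin n)).realize v = aOf M := by
  show Structure.funMap (L := Lg) (GroupFunc.aconst : Lg.Functions 0) _ = _
  rw [funMap_a_eq]

end RealizeHelpers

open FirstOrder.Language.Term in
/-- the key positive formula : v1 is a product of two conjugates of v0 -/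
noncomputable def phi : PosForm Lg 2 :=
  PosForm.ex (PosForm.ex (PosForm.equal (var 1)
    (tmul (tmul (tmul (var 2) (var 0)) (tinv (var 2)))
          (tmul (tmul (var 3) (var 0)) (tinv (var 3))))))

lemma snoc_vals {M : Type} (v : Fin 2 → M) (x₁ x₂ : M) :
    (Fin.snoc (Fin.snoc v x₁) x₂ : Fin 4 → M) = ![v 0, v 1, x₁, x₂] := by
  funext i
  fin_cases i <;> rfl

lemma realize_phi_iff {M : Type} [Lg.Structure M] [Group M]
    (hmul : ∀ x y : M, x * y = Structure.funMap (L := Lg) (GroupFunc.mul : Lg.Functions 2) ![x, y])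
    (hinv : ∀ x : M, x⁻¹ = Structure.funMap (L := Lg) (GroupFunc.inv : Lg.Functions 1) ![x])
    (v : Fin 2 → M) :
    (phi.Realize v) ↔ ∃ x₁ x₂ : M, v 1 = x₁ * v 0 * x₁⁻¹ * (x₂ * v 0 * x₂⁻¹) := by
  show (∃ x₁, ∃ x₂, (PosForm.equal _ _).Realize _) ↔ _
  refine exists_congr fun x₁ => exists_congr fun x₂ => ?_
  show (Term.var 1).realize _ = _ ↔ _
  rw [snoc_vals]
  rw [realize_tmul hmul, realize_tmul hmul, realize_tmul hmul, realize_tmul hmul,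
    realize_tmul hmul, realize_tinv hinv, realize_tinv hinv]
  simp [Term.realize]

/-- membership facts for Tgplus (the six axioms) -/
lemma mem_tgplus_assoc : (⟨3, PosForm.equal (Term.var 0) (Term.var 0),
    PosForm.equal (tmul (tmul (Term.var 0) (Term.var 1)) (Term.var 2))
      (tmul (Term.var 0) (tmul (Term.var 1) (Term.var 2)))⟩ : HInd Lg) ∈ Tgplus := by
  left; rfl

lemma mem_tgplus_ane : (⟨0, PosForm.equal ta tone, PosForm.falsum⟩ : HInd Lg) ∈ Tgplus := by
  right; right; right; right; right; rfl

/-- the structure grpS models Tgplus when aH is nontrivial -/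
lemma grpS_models (H : Type) [Group H] (aH : H) (ha : aH ≠ 1) :
    @HModels Lg H (grpS H aH) Tgplus := by
  letI : Lg.Structure H := grpS H aH
  have hmul : ∀ x y : H, x * y = Structure.funMap (L := Lg) (GroupFunc.mul : Lg.Functions 2) ![x, y] :=
    fun x y => rfl
  have hone : (1 : H) = Structure.funMap (L := Lg) (GroupFunc.one : Lg.Functions 0) ![] := rfl
  have hinv : ∀ x : H, x⁻¹ = Structure.funMap (L := Lg) (GroupFunc.inv : Lg.Functions 1) ![x] :=
    fun x => rfl
  intro s hs
  simp only [Tgplus, Set.mem_insert_iff, Set.mem_singleton_iff] at hs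
  rcases hs with rfl | rfl | rfl | rfl | rfl | rfl
  · intro v _
    show (tmul (tmul _ _) _).realize v = (tmul _ (tmul _ _)).realize v
    rw [realize_tmul hmul, realize_tmul hmul, realize_tmul hmul, realize_tmul hmul]
    exact mul_assoc _ _ _
  · intro v _
    show (tmul tone _).realize v = (Term.var 0).realize v
    rw [realize_tmul hmul, realize_tone hone]
    exact one_mul _
  · intro v _
    show (tmul _ tone).realize v = (Term.var 0).realize v
    rw [realize_tmul hmul, realize_tone hone]
    exact mul_one _
  · intro v _
    show (tmul (tinv _) _).realize v = tone.realize v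
    rw [realize_tmul hmul, realize_tinv hinv, realize_tone hone]
    exact inv_mul_cancel _
  · intro v _
    show (tmul _ (tinv _)).realize v = tone.realize v
    rw [realize_tmul hmul, realize_tinv hinv, realize_tone hone]
    exact mul_inv_cancel _
  · intro v hv
    exfalso
    apply ha
    have : (ta : Lg.Term (Fin 0)).realize v = tone.realize v := hv
    rw [realize_ta, realize_tone hone] at this
    exact this

end LogicLayer

/-- every pc model of `T_g⁺` is a simple group (with respect to the
group structure induced by the interpretation of the language). -/
theorem pc_model_of_Tgplus_isSimpleGroup (G : Type) [Lg.Structure G]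
    (hG : IsPC Tgplus G) [Group G]
    (hmul : ∀ x y : G, x * y = FirstOrder.Language.Structure.funMap (L := Lg) (M := G)
      (GroupFunc.mul : Lg.Functions 2) ![x, y])
    (hone : (1 : G) = FirstOrder.Language.Structure.funMap (L := Lg) (M := G)
      (GroupFunc.one : Lg.Functions 0) ![])
    (hinv : ∀ x : G, x⁻¹ = FirstOrder.Language.Structure.funMap (L := Lg) (M := G)
      (GroupFunc.inv : Lg.Functions 1) ![x]) :
    IsSimpleGroup G := by
  classical
  obtain ⟨hmodG, himm⟩ := hG
  -- the interpretation of the constant a in G is nontrivial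
  have haG : aOf G ≠ 1 := by
    intro h
    have h6 := hmodG _ mem_tgplus_ane
    apply h6 Fin.elim0
    show (ta : Lg.Term (Fin 0)).realize _ = tone.realize _
    rw [realize_ta, realize_tone hone, h]
  -- the target structure : permutations of G × ℤ
  set N := Equiv.Perm (G × ℤ) with hN
  have haN : PCPerm.rrAct (aOf G) ≠ (1 : N) := by
    intro h
    apply haG
    have h2 : PCPerm.rrAct (aOf G) ((1 : G), (0 : ℤ)) = ((1 : G), (0 : ℤ)) := by
      rw [h]; rfl
    rw [PCPerm.rrAct_apply] at h2
    have h3 : (1 : G) * (aOf G)⁻¹ = 1 := congrArg Prod.fst h2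
    rw [one_mul] at h3
    rw [← inv_inv (aOf G), h3, inv_one]
  letI instN : Lg.Structure N := grpS N (PCPerm.rrAct (aOf G))
  have hmodN : HModels N Tgplus := grpS_models N _ haN
  -- the homomorphism G → N
  have hfun_mul : ∀ (x : Fin 2 → G),
      Structure.funMap (L := Lg) (GroupFunc.mul : Lg.Functions 2) x = x 0 * x 1 :=
    funMap_mul_eq hmul
  let F : G →[Lg] N :=
    { toFun := fun x => PCPerm.rrAct x
      map_fun' := by
        intro n f x
        match n, f with
        | _, GroupFunc.mul =>
            rw [funMap_mul_eq hmul]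
            rw [map_mul]
            rfl
        | _, GroupFunc.inv =>
            rw [funMap_inv_eq hinv]
            rw [map_inv]
            rfl
        | _, GroupFunc.one =>
            rw [funMap_one_eq hone]
            rw [map_one]
            rfl
        | _, GroupFunc.aconst =>
            rw [funMap_a_eq (M := G)]
            rfl
      map_rel' := by
        intro n r x
        exact Empty.elim r }
  have hFco : ∀ x : G, F x = PCPerm.rrAct x := fun _ => rfl
  -- key step : membership of arbitrary elements in nontrivial normal subgroups
  have key : ∀ (K : Subgroup G), K.Normal → ∀ g : G, g ∈ K → g ≠ 1 → ∀ h : G, h ∈ K := by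
    intro K hKnorm g hgK hg h
    by_cases hh : h = 1
    · rw [hh]; exact K.one_mem
    -- the two-conjugates decomposition in N
    obtain ⟨w₁, w₂, hw⟩ := PCPerm.exists_two_conj g h hg
    have himmF := @himm N instN hmodN F
    have hrealN : phi.Realize ((F : G → N) ∘ ![g, h]) := by
      have hcomp : (F : G → N) ∘ ![g, h] = ![PCPerm.rrAct g, PCPerm.rrAct h] := by
        funext i
        fin_cases i <;> rfl
      rw [hcomp]
      rw [realize_phi_iff (fun x y => rfl) (fun x => rfl)]
      refine ⟨w₁, w₂, ?_⟩
      show PCPerm.rrAct h = _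
      rw [hw]
      rfl
    have hrealG : phi.Realize ![g, h] := (himmF phi ![g, h]).mpr hrealN
    rw [realize_phi_iff hmul hinv] at hrealG
    obtain ⟨u₁, u₂, hu⟩ := hrealG
    have h0 : (![g, h] : Fin 2 → G) 0 = g := rfl
    have h1 : (![g, h] : Fin 2 → G) 1 = h := rfl
    rw [h0, h1] at hu
    rw [hu]
    exact K.mul_mem (hKnorm.conj_mem g hgK u₁) (hKnorm.conj_mem g hgK u₂)
  -- conclude simplicity
  haveI : Nontrivial G := ⟨⟨aOf G, 1, haG⟩⟩
  constructor
  intro K hKnorm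
  by_cases hbot : K = ⊥
  · exact Or.inl hbot
  · right
    rw [Subgroup.eq_top_iff']
    have : ∃ g ∈ K, g ≠ 1 := by
      by_contra hcon
      push_neg at hcon
      exact hbot ((Subgroup.eq_bot_iff_forall K).mpr hcon)
    obtain ⟨g, hgK, hg⟩ := this
    exact fun h => key K hKnorm g hgK hg h

end PositiveLogic
end
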